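/- Rényi divergence from a strongly log-concave Gibbs measure to a centered isotropic Gaussian (combined bound in the proof of Lemma 7.1, obtained via the weak triangle inequality). Let 𝓛 : ℝ^p → ℝ be differentiable, m-strongly convex, and M-smooth with m ≤ M, whose global minimizer θ_opt satisfies ‖θ_opt‖ ≤ R, and let β > 0. Let P be the probability measure on ℝ^p with density exp(−β𝓛(θ))/Z where Z = ∫_{ℝ^p} exp(−β𝓛(θ)) dθ, and let Θ₀ be the probability measure with density (βm/(2π))^{p/2} exp(−(βm/2)‖θ‖²) (the Gaussian N(0, (βm)^{-1} I_p)). Then for every α ≥ 2, R_α(P, Θ₀) ≤ (3p/2)·log(M/m) + βm(2α − 1)R²/2. -/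

import Mathlib

open MeasureTheory Real

noncomputable section

/-- ℝ^p as a Euclidean space. -/
abbrev Eu (p : ℕ) := EuclideanSpace ℝ (Fin p)

/-- Rényi divergence of order `α` between two probability densities `pd, qd`
with respect to Lebesgue measure on ℝ^p:
`R_α(P, Q) = (α − 1)⁻¹ log ∫ pd(θ)^α qd(θ)^(1−α) dθ`. -/
def renyiDiv {p : ℕ} (α : ℝ) (pd qd : Eu p → ℝ) : ℝ :=
  (α - 1)⁻¹ * Real.log (∫ θ, pd θ ^ α * qd θ ^ (1 - α))

/-- The density of the Gaussian `N(μ, (βm)⁻¹ I_p)` on ℝ^p. -/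
def gaussDensity (p : ℕ) (βm : ℝ) (μ : Eu p) (θ : Eu p) : ℝ :=
  (βm / (2 * Real.pi)) ^ ((p : ℝ) / 2) * Real.exp (-(βm / 2) * ‖θ - μ‖ ^ 2)

lemma gauss_integrable' {p : ℕ} {b : ℝ} (hb : 0 < b) :
    Integrable (fun x : Eu p => Real.exp (-b * ‖x‖ ^ 2)) := by
  have h := (GaussianFourier.integrable_cexp_neg_mul_sq_norm_add (V := Eu p)
    (b := (b : ℂ)) (by simpa using hb) 0 0).norm
  refine h.congr (Filter.Eventually.of_forall fun x => ?_)
  simp [Complex.norm_exp]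
  left; norm_cast

lemma gauss_integral' {p : ℕ} {b : ℝ} (hb : 0 < b) :
    ∫ x : Eu p, Real.exp (-b * ‖x‖ ^ 2) = (π / b) ^ ((p : ℝ) / 2) := by
  rw [GaussianFourier.integral_rexp_neg_mul_sq_norm (V := Eu p) hb]
  norm_num [finrank_euclideanSpace_fin]


lemma smooth_upper' {p : ℕ} (𝓛 : Eu p → ℝ) (g : Eu p → Eu p)
    (hgrad : ∀ x, HasGradientAt 𝓛 (g x) x) (M : ℝ) (hM : 0 ≤ M)
    (hsm : LipschitzWith M.toNNReal g)
    (θopt : Eu p) (hg0 : g θopt = 0) (x : Eu p) :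
    𝓛 x ≤ 𝓛 θopt + M / 2 * ‖x - θopt‖ ^ 2 := by
  set v := x - θopt with hv
  set c : ℝ → Eu p := fun t => θopt + t • v with hc
  have hline : ∀ t : ℝ, HasDerivAt c v t := by
    intro t
    simpa [hc] using ((hasDerivAt_id t).smul_const v).const_add θopt
  have hcomp : ∀ t : ℝ, HasDerivAt (fun t => 𝓛 (c t)) (inner ℝ (g (c t)) v : ℝ) t := by
    intro t
    have := ((hgrad (c t)).hasFDerivAt.comp_hasDerivAt t (hline t))
    simpa [InnerProductSpace.toDual_apply_apply, Function.comp_def] using this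
  set φ : ℝ → ℝ := fun t => M * t ^ 2 / 2 * ‖v‖ ^ 2 - 𝓛 (c t) with hφ
  have hφd : ∀ t : ℝ, HasDerivAt φ (M * t * ‖v‖ ^ 2 - inner ℝ (g (c t)) v) t := by
    intro t
    have h1 : HasDerivAt (fun t : ℝ => M * t ^ 2 / 2 * ‖v‖ ^ 2) (M * t * ‖v‖ ^ 2) t := by
      have h2 : HasDerivAt (fun t : ℝ => M * t ^ 2 / 2 * ‖v‖ ^ 2)
          (M * (2 * t ^ 1) / 2 * ‖v‖ ^ 2) t := by
        exact (((hasDerivAt_pow 2 t).const_mul M).div_const 2).mul_const _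
      convert h2 using 1; ring
    exact h1.sub (hcomp t)
  have hmono : MonotoneOn φ (Set.Icc (0:ℝ) 1) := by
    apply monotoneOn_of_deriv_nonneg (convex_Icc 0 1)
    · exact Continuous.continuousOn (by
        exact continuous_iff_continuousAt.2 fun t => (hφd t).continuousAt)
    · intro t ht
      exact ((hφd t).differentiableAt).differentiableWithinAt
    · intro t ht
      rw [interior_Icc] at ht
      rw [(hφd t).deriv]
      have h1 : (inner ℝ (g (c t)) v : ℝ) ≤ ‖g (c t)‖ * ‖v‖ := real_inner_le_norm _ _
      have h2 : ‖g (c t)‖ ≤ M * (t * ‖v‖) := by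
        have h3 := hsm.dist_le_mul (c t) θopt
        rw [dist_eq_norm, dist_eq_norm, hg0, sub_zero] at h3
        have hct : c t - θopt = t • v := by simp [hc]
        rw [hct, norm_smul, Real.norm_eq_abs, abs_of_pos ht.1] at h3
        calc ‖g (c t)‖ ≤ M.toNNReal * (t * ‖v‖) := h3
          _ = M * (t * ‖v‖) := by rw [Real.coe_toNNReal M hM]
      nlinarith [norm_nonneg v, norm_nonneg (g (c t)), ht.1]
  have h01 := hmono (Set.mem_Icc.2 ⟨le_refl 0, zero_le_one⟩)
    (Set.mem_Icc.2 ⟨zero_le_one, le_refl 1⟩) zero_le_one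
  have hc0 : c 0 = θopt := by simp [hc]
  have hc1 : c 1 = x := by simp [hc, hv]
  simp only [hφ, hc0, hc1] at h01
  nlinarith [h01]

lemma strong_lower' {p : ℕ} (𝓛 : Eu p → ℝ) (m : ℝ) (hm : 0 < m)
    (hsc : ConvexOn ℝ Set.univ (fun x => 𝓛 x - m / 2 * ‖x‖ ^ 2))
    (θopt : Eu p) (hopt : ∀ x, 𝓛 θopt ≤ 𝓛 x) (x : Eu p) :
    𝓛 θopt + m / 2 * ‖x - θopt‖ ^ 2 ≤ 𝓛 x := by
  have key : ∀ t ∈ Set.Ioo (0:ℝ) 1,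
      𝓛 θopt + m / 2 * (1 - t) * ‖x - θopt‖ ^ 2 ≤ 𝓛 x := by
    intro t ht
    have h := hsc.2 (Set.mem_univ θopt) (Set.mem_univ x)
      (by linarith [ht.2] : (0:ℝ) ≤ 1 - t) (le_of_lt ht.1) (by ring)
    have hmin := hopt ((1 - t) • θopt + t • x)
    have e1 : ‖(1 - t) • θopt + t • x‖ ^ 2
        = (1-t)^2 * ‖θopt‖^2 + 2*(1-t)*t*(inner ℝ θopt x : ℝ) + t^2*‖x‖^2 := by
      rw [norm_add_sq_real, norm_smul, norm_smul, real_inner_smul_left, real_inner_smul_right]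
      rw [Real.norm_eq_abs, Real.norm_eq_abs, mul_pow, mul_pow, sq_abs, sq_abs]
      ring
    have e2 : ‖x - θopt‖^2 = ‖x‖^2 - 2*(inner ℝ θopt x : ℝ) + ‖θopt‖^2 := by
      rw [norm_sub_sq_real, real_inner_comm]
    simp only [smul_eq_mul] at h
    rw [e1] at h
    have h4 : t * (𝓛 θopt + m / 2 * (1 - t) * ‖x - θopt‖ ^ 2) ≤ t * 𝓛 x := by
      rw [e2]; nlinarith [h, hmin]
    exact le_of_mul_le_mul_left h4 ht.1
  have hlim : Filter.Tendsto (fun t : ℝ => 𝓛 θopt + m / 2 * (1 - t) * ‖x - θopt‖ ^ 2)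
      (nhdsWithin 0 (Set.Ioi 0)) (nhds (𝓛 θopt + m / 2 * ‖x - θopt‖ ^ 2)) := by
    have hcont : ContinuousAt (fun t : ℝ => 𝓛 θopt + m / 2 * (1 - t) * ‖x - θopt‖ ^ 2) 0 := by
      fun_prop
    have h5 := hcont.tendsto.mono_left (nhdsWithin_le_nhds (s := Set.Ioi (0:ℝ)))
    simpa using h5
  refine le_of_tendsto hlim ?_
  filter_upwards [Ioo_mem_nhdsGT_of_mem (by norm_num : (0:ℝ) ∈ Set.Ico (0:ℝ) 1)] with t ht
  exact key t ht


set_option maxHeartbeats 2000000 in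
/-- Rényi divergence from a strongly log-concave Gibbs measure to a
centered isotropic Gaussian. -/
theorem renyi_gibbs_to_centered_gaussian
    {p : ℕ} (hp : 1 ≤ p)
    (𝓛 : Eu p → ℝ) (g : Eu p → Eu p) (hgrad : ∀ x, HasGradientAt 𝓛 (g x) x)
    (m M : ℝ) (hm : 0 < m) (hmM : m ≤ M)
    -- `m`-strong convexity: `𝓛 - (m/2)‖·‖²` is convex
    (hsc : ConvexOn ℝ Set.univ (fun x => 𝓛 x - m / 2 * ‖x‖ ^ 2))
    -- `M`-smoothness: the gradient is `M`-Lipschitz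
    (hsm : LipschitzWith M.toNNReal g)
    (θopt : Eu p) (hopt : ∀ x, 𝓛 θopt ≤ 𝓛 x)
    (R : ℝ) (hR : ‖θopt‖ ≤ R)
    (β : ℝ) (hβ : 0 < β)
    (α : ℝ) (hα : 2 ≤ α) :
    renyiDiv α
        (fun θ => Real.exp (-β * 𝓛 θ) / (∫ x, Real.exp (-β * 𝓛 x)))
        (gaussDensity p (β * m) 0) ≤
      (3 * p / 2) * Real.log (M / m) + β * m * (2 * α - 1) * R ^ 2 / 2 := by
  have hM : 0 < M := lt_of_lt_of_le hm hmM
  have hπ : 0 < π := Real.pi_pos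
  -- gradient vanishes at the minimizer
  have hg0 : g θopt = 0 := by
    have hloc : IsLocalMin 𝓛 θopt := Filter.Eventually.of_forall hopt
    have h0 := hloc.hasFDerivAt_eq_zero (hgrad θopt).hasFDerivAt
    have h1 := congrArg (InnerProductSpace.toDual ℝ (Eu p)).symm h0
    simpa using h1
  have hup : ∀ x, 𝓛 x ≤ 𝓛 θopt + M / 2 * ‖x - θopt‖ ^ 2 :=
    smooth_upper' 𝓛 g hgrad M hM.le hsm θopt hg0
  have hlow : ∀ x, 𝓛 θopt + m / 2 * ‖x - θopt‖ ^ 2 ≤ 𝓛 x :=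
    strong_lower' 𝓛 m hm hsc θopt hopt
  have hcont : Continuous 𝓛 :=
    continuous_iff_continuousAt.2 fun x => (hgrad x).hasFDerivAt.differentiableAt.continuousAt
  -- integrability of the Gibbs density numerator
  have hIgm : Integrable (fun x : Eu p => Real.exp (-(β * m / 2) * ‖x - θopt‖ ^ 2)) :=
    (gauss_integrable' (p := p) (by positivity)).comp_sub_right θopt
  have hIgM : Integrable (fun x : Eu p => Real.exp (-(β * M / 2) * ‖x - θopt‖ ^ 2)) :=
    (gauss_integrable' (p := p) (by positivity)).comp_sub_right θopt
  have hZint : Integrable (fun x : Eu p => Real.exp (-β * 𝓛 x)) := by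
    apply Integrable.mono' (hIgm.const_mul (Real.exp (-β * 𝓛 θopt)))
    · exact (Continuous.aestronglyMeasurable (by continuity))
    · filter_upwards with x
      rw [Real.norm_eq_abs, abs_of_pos (Real.exp_pos _), ← Real.exp_add]
      apply Real.exp_le_exp.2
      nlinarith [hlow x, hβ]
  set Z := ∫ x, Real.exp (-β * 𝓛 x) with hZdef
  have hZge : Real.exp (-β * 𝓛 θopt) * (2 * π / (β * M)) ^ ((p : ℝ) / 2) ≤ Z := by
    have hEq : ∫ x : Eu p, Real.exp (-β * 𝓛 θopt) * Real.exp (-(β * M / 2) * ‖x - θopt‖ ^ 2)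
        = Real.exp (-β * 𝓛 θopt) * (2 * π / (β * M)) ^ ((p : ℝ) / 2) := by
      rw [integral_const_mul]
      congr 1
      rw [integral_sub_right_eq_self (μ := volume)
        (fun x : Eu p => Real.exp (-(β * M / 2) * ‖x‖ ^ 2)) θopt]
      rw [gauss_integral' (by positivity)]
      congr 1
      field_simp
    rw [← hEq]
    apply integral_mono (hIgM.const_mul _) hZint
    intro x
    show Real.exp (-β * 𝓛 θopt) * Real.exp (-(β * M / 2) * ‖x - θopt‖ ^ 2) ≤ _
    rw [← Real.exp_add]
    apply Real.exp_le_exp.2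
    nlinarith [hup x, hβ]
  have hZpos : 0 < Z := lt_of_lt_of_le (by positivity) hZge
  have hm0 : m ≠ 0 := hm.ne'
  have hM0 : M ≠ 0 := hM.ne'
  have hβ0 : β ≠ 0 := hβ.ne'
  have hπ0 : π ≠ 0 := hπ.ne'
  set K := (M / m) ^ ((p : ℝ) / 2) with hKdef
  have hK1 : (1:ℝ) ≤ K := by
    rw [hKdef, show (1:ℝ) = 1 ^ ((p:ℝ)/2) from (Real.one_rpow _).symm]
    exact Real.rpow_le_rpow zero_le_one (by rw [le_div_iff₀ hm]; linarith) (by positivity)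
  have hKpos : (0:ℝ) < K := lt_of_lt_of_le one_pos hK1
  have hconst : K * ((β * m / (2 * π)) ^ ((p : ℝ) / 2))
      * ((2 * π / (β * M)) ^ ((p : ℝ) / 2)) = 1 := by
    rw [hKdef, ← Real.mul_rpow (by positivity) (by positivity),
      ← Real.mul_rpow (by positivity) (by positivity)]
    rw [show M / m * (β * m / (2 * π)) * (2 * π / (β * M)) = 1 by field_simp]
    exact Real.one_rpow _
  have hgaussPos : ∀ (μ θ : Eu p), 0 < gaussDensity p (β * m) μ θ := by
    intro μ θ; unfold gaussDensity; positivity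
  have hpd_le : ∀ θ, Real.exp (-β * 𝓛 θ) / Z ≤ K * gaussDensity p (β * m) θopt θ := by
    intro θ
    rw [div_le_iff₀ hZpos]
    calc Real.exp (-β * 𝓛 θ)
        ≤ (K * ((β * m / (2 * π)) ^ ((p:ℝ)/2)) * ((2 * π / (β * M)) ^ ((p:ℝ)/2))) *
          (Real.exp (-(β * m / 2) * ‖θ - θopt‖ ^ 2) * Real.exp (-β * 𝓛 θopt)) := by
          rw [hconst, one_mul, ← Real.exp_add]
          apply Real.exp_le_exp.2
          nlinarith [hlow θ, hβ]
      _ = K * gaussDensity p (β * m) θopt θ *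
          (Real.exp (-β * 𝓛 θopt) * ((2 * π / (β * M)) ^ ((p:ℝ)/2))) := by
          unfold gaussDensity; ring
      _ ≤ K * gaussDensity p (β * m) θopt θ * Z :=
          mul_le_mul_of_nonneg_left hZge (le_of_lt (mul_pos hKpos (hgaussPos _ _)))
  -- pointwise product of Gaussian densities
  have hprod : ∀ θ : Eu p,
      gaussDensity p (β*m) θopt θ ^ α * gaussDensity p (β*m) 0 θ ^ (1-α)
      = Real.exp (β*m/2 * α * (α-1) * ‖θopt‖^2) *
        (((β*m/(2*π)) ^ ((p:ℝ)/2)) * Real.exp (-(β*m/2) * ‖θ - α • θopt‖^2)) := by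
    intro θ
    unfold gaussDensity
    have hc0 : (0:ℝ) < (β*m/(2*π)) ^ ((p:ℝ)/2) := by positivity
    rw [sub_zero]
    rw [Real.mul_rpow hc0.le (Real.exp_nonneg _), Real.mul_rpow hc0.le (Real.exp_nonneg _)]
    rw [← Real.exp_mul, ← Real.exp_mul]
    have hcc : ((β*m/(2*π)) ^ ((p:ℝ)/2)) ^ α * ((β*m/(2*π)) ^ ((p:ℝ)/2)) ^ (1-α)
        = (β*m/(2*π)) ^ ((p:ℝ)/2) := by
      rw [← Real.rpow_add hc0, show α + (1-α) = 1 by ring, Real.rpow_one]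
    have eA : (-(β*m / 2) * ‖θ-θopt‖^2) * α + (-(β*m / 2) * ‖θ‖^2) * (1-α)
        = β*m/2 * α * (α-1) * ‖θopt‖^2 + (-(β*m/2) * ‖θ - α • θopt‖^2) := by
      have e1 : ‖θ-θopt‖^2 = ‖θ‖^2 - 2*(inner ℝ θ θopt : ℝ) + ‖θopt‖^2 := norm_sub_sq_real θ θopt
      have e2 : ‖θ - α • θopt‖^2 = ‖θ‖^2 - 2*(α*(inner ℝ θ θopt : ℝ)) + α^2*‖θopt‖^2 := by
        rw [norm_sub_sq_real, real_inner_smul_right, norm_smul, Real.norm_eq_abs,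
          mul_pow, sq_abs]
      rw [e1, e2]; ring
    calc ((β*m/(2*π)) ^ ((p:ℝ)/2)) ^ α * Real.exp ((-(β*m/2) * ‖θ-θopt‖^2) * α) *
          (((β*m/(2*π)) ^ ((p:ℝ)/2)) ^ (1-α) * Real.exp ((-(β*m/2) * ‖θ‖^2) * (1-α)))
        = (((β*m/(2*π)) ^ ((p:ℝ)/2)) ^ α * ((β*m/(2*π)) ^ ((p:ℝ)/2)) ^ (1-α)) *
          (Real.exp ((-(β*m/2) * ‖θ-θopt‖^2) * α) * Real.exp ((-(β*m/2) * ‖θ‖^2) * (1-α))) := by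
          ring
      _ = ((β*m/(2*π)) ^ ((p:ℝ)/2)) *
          Real.exp ((-(β*m/2) * ‖θ-θopt‖^2) * α + (-(β*m/2) * ‖θ‖^2) * (1-α)) := by
          rw [hcc, ← Real.exp_add]
      _ = Real.exp (β*m/2 * α * (α-1) * ‖θopt‖^2) *
          (((β*m/(2*π)) ^ ((p:ℝ)/2)) * Real.exp (-(β*m/2) * ‖θ - α • θopt‖^2)) := by
          rw [eA, Real.exp_add]; ring
  -- the dominating function and its integral
  have hbndInt0 : Integrable (fun θ : Eu p => Real.exp (-(β*m/2) * ‖θ - α • θopt‖^2)) :=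
    (gauss_integrable' (by positivity)).comp_sub_right (α • θopt)
  have hcc1 : ((β*m/(2*π)) ^ ((p:ℝ)/2)) * ((2*π/(β*m)) ^ ((p:ℝ)/2)) = 1 := by
    rw [← Real.mul_rpow (by positivity) (by positivity),
      show (β*m/(2*π)) * (2*π/(β*m)) = 1 by field_simp, Real.one_rpow]
  have hbndEq : ∫ θ : Eu p, K ^ α * (Real.exp (β*m/2*α*(α-1)*‖θopt‖^2) *
      (((β*m/(2*π)) ^ ((p:ℝ)/2)) * Real.exp (-(β*m/2) * ‖θ - α • θopt‖^2)))
      = K ^ α * Real.exp (β*m/2*α*(α-1)*‖θopt‖^2) := by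
    rw [integral_const_mul, integral_const_mul, integral_const_mul]
    rw [integral_sub_right_eq_self (μ := volume)
      (fun θ : Eu p => Real.exp (-(β*m/2) * ‖θ‖^2)) (α • θopt)]
    rw [gauss_integral' (by positivity)]
    rw [show π / (β*m/2) = 2*π/(β*m) by field_simp]
    rw [hcc1, mul_one]
  set I := ∫ θ, (Real.exp (-β * 𝓛 θ) / Z) ^ α * gaussDensity p (β * m) 0 θ ^ (1 - α)
    with hIdef
  have hIle : I ≤ K ^ α * Real.exp (β*m/2*α*(α-1)*‖θopt‖^2) := by
    rw [hIdef, ← hbndEq]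
    apply integral_mono_of_nonneg
    · filter_upwards with θ
      exact mul_nonneg (Real.rpow_nonneg (by positivity) _)
        (Real.rpow_nonneg (hgaussPos 0 θ).le _)
    · exact ((hbndInt0.const_mul _).const_mul _).const_mul _
    · filter_upwards with θ
      have h3 : (Real.exp (-β * 𝓛 θ) / Z) ^ α ≤ (K * gaussDensity p (β*m) θopt θ) ^ α :=
        Real.rpow_le_rpow (by positivity) (hpd_le θ) (by linarith)
      have h4 := mul_le_mul_of_nonneg_right h3
        (Real.rpow_nonneg (hgaussPos 0 θ).le (1-α))
      calc (Real.exp (-β * 𝓛 θ) / Z) ^ α * gaussDensity p (β*m) 0 θ ^ (1-α)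
          ≤ (K * gaussDensity p (β*m) θopt θ) ^ α * gaussDensity p (β*m) 0 θ ^ (1-α) := h4
        _ = K ^ α * (gaussDensity p (β*m) θopt θ ^ α * gaussDensity p (β*m) 0 θ ^ (1-α)) := by
            rw [Real.mul_rpow hKpos.le (hgaussPos θopt θ).le]; ring
        _ = K ^ α * (Real.exp (β*m/2*α*(α-1)*‖θopt‖^2) *
            (((β*m/(2*π)) ^ ((p:ℝ)/2)) * Real.exp (-(β*m/2) * ‖θ - α • θopt‖^2))) := by
            rw [hprod θ]
  -- take logarithms and finish
  have hαm1 : (0:ℝ) < α - 1 := by linarith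
  have hL : 0 ≤ Real.log (M/m) := Real.log_nonneg (by rw [le_div_iff₀ hm]; linarith)
  have hRHSlog : Real.log (K ^ α * Real.exp (β*m/2*α*(α-1)*‖θopt‖^2))
      = α * ((p:ℝ)/2 * Real.log (M/m)) + β*m/2*α*(α-1)*‖θopt‖^2 := by
    rw [Real.log_mul (Real.rpow_pos_of_pos hKpos α).ne' (Real.exp_ne_zero _), Real.log_exp,
      Real.log_rpow hKpos, hKdef, Real.log_rpow (by positivity)]
  have hIpos0 : 0 ≤ I := by
    rw [hIdef]
    apply integral_nonneg
    intro θ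
    exact mul_nonneg (Real.rpow_nonneg (by positivity) _)
      (Real.rpow_nonneg (hgaussPos 0 θ).le _)
  have hlogle : Real.log I ≤ α * ((p:ℝ)/2 * Real.log (M/m)) + β*m/2*α*(α-1)*‖θopt‖^2 := by
    rw [← hRHSlog]
    rcases eq_or_lt_of_le hIpos0 with h | h
    · rw [← h, Real.log_zero]
      apply Real.log_nonneg
      have hE1 : 1 ≤ Real.exp (β*m/2*α*(α-1)*‖θopt‖^2) := Real.one_le_exp (by positivity)
      have hK2 : (1:ℝ) ≤ K ^ α := by
        rw [show (1:ℝ) = 1 ^ α from (Real.one_rpow α).symm]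
        exact Real.rpow_le_rpow zero_le_one hK1 (by linarith)
      nlinarith
    · exact Real.log_le_log h hIle
  have hgoal : renyiDiv α
      (fun θ => Real.exp (-β * 𝓛 θ) / (∫ x, Real.exp (-β * 𝓛 x)))
      (gaussDensity p (β * m) 0) = (α - 1)⁻¹ * Real.log I := by
    rw [renyiDiv, hIdef]
  rw [hgoal]
  have hmain : (α-1)⁻¹ * Real.log I
      ≤ (α-1)⁻¹ * (α * ((p:ℝ)/2 * Real.log (M/m)) + β*m/2*α*(α-1)*‖θopt‖^2) :=
    mul_le_mul_of_nonneg_left hlogle (by positivity)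
  refine le_trans hmain ?_
  have hmu2 : ‖θopt‖^2 ≤ R^2 := pow_le_pow_left₀ (norm_nonneg _) hR 2
  have hs : (α-1)⁻¹ * (α-1) = 1 := inv_mul_cancel₀ hαm1.ne'
  have ht1 : (α-1)⁻¹ * α ≤ 2 := by
    rw [inv_mul_le_iff₀ hαm1]; linarith
  have expand : (α-1)⁻¹ * (α * ((p:ℝ)/2 * Real.log (M/m)) + β*m/2*α*(α-1)*‖θopt‖^2)
      = ((α-1)⁻¹ * α) * ((p:ℝ)/2 * Real.log (M/m))
        + β*m/2*α*‖θopt‖^2 * ((α-1)⁻¹*(α-1)) := by ring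
  rw [expand, hs, mul_one]
  have hp1 : (1:ℝ) ≤ (p:ℝ) := by exact_mod_cast hp
  have hterm1 : ((α-1)⁻¹ * α) * ((p:ℝ)/2 * Real.log (M/m)) ≤ 3*(p:ℝ)/2 * Real.log (M/m) := by
    have h6 := mul_le_mul_of_nonneg_right ht1
      (show (0:ℝ) ≤ (p:ℝ)/2 * Real.log (M/m) by positivity)
    nlinarith
  have hterm2 : β*m/2*α*‖θopt‖^2 ≤ β * m * (2*α - 1) * R^2 / 2 := by
    have h7 := mul_le_mul_of_nonneg_left hmu2 (show (0:ℝ) ≤ β*m/2*α by positivity)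
    nlinarith [h7, mul_nonneg (mul_nonneg (by positivity : (0:ℝ) ≤ β*m/2)
      (by linarith : (0:ℝ) ≤ α-1)) (sq_nonneg R)]
  linarith

end
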